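/- Let π₁,…,πₙ > 0, u₁,…,uₙ > 0, and p₁,…,pₙ > 0 be real numbers, and let Q ∈ ℝ^{n×n} be a normally elliptic matrix satisfying the detailed-balance condition πᵢ·Q_{ij} = πⱼ·Q_{ji} for all i ≠ j. Define the diffusion matrix A of the general SKT population model by A_{ij} = δ_{ij}·pᵢ + uᵢ·Q_{ij}, and the Hessian matrix H = diag(π₁/u₁,…,πₙ/uₙ). Then H·A, whose entries are (H·A)_{ij} = δ_{ij}·πᵢpᵢ/uᵢ + πᵢ·Q_{ij}, is symmetric positive definite. (This is the entropy structure of the model ∂ₜuᵢ = Δ(uᵢpᵢ(u)) with Q_{ij} = ∂pᵢ/∂uⱼ and entropy density h(u) = Σᵢ πᵢuᵢ(log uᵢ − 1).) -/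

import Mathlib

open Matrix

/-- A real square matrix is *normally elliptic* if every eigenvalue
(i.e. every element of the spectrum of the associated complex matrix)
has positive real part. -/
def NormallyElliptic {n : ℕ} (A : Matrix (Fin n) (Fin n) ℝ) : Prop :=
  ∀ μ ∈ spectrum ℂ (A.map Complex.ofReal), 0 < μ.re

/-- A (possibly nonsymmetric) real matrix is positive definite if `zᵀ M z > 0`
for all nonzero `z ∈ ℝⁿ`. -/
def PosDefMat {n : ℕ} (M : Matrix (Fin n) (Fin n) ℝ) : Prop :=
  ∀ z : Fin n → ℝ, z ≠ 0 → 0 < z ⬝ᵥ M.mulVec z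

lemma real_spectrum_to_complex {n : ℕ} (A : Matrix (Fin n) (Fin n) ℝ) {r : ℝ}
    (hr : r ∈ spectrum ℝ A) : (r : ℂ) ∈ spectrum ℂ (A.map Complex.ofReal) := by
  rw [spectrum.mem_iff, Matrix.isUnit_iff_isUnit_det, isUnit_iff_ne_zero, not_not] at hr ⊢
  have h : (algebraMap ℂ (Matrix (Fin n) (Fin n) ℂ) (r : ℂ) - A.map Complex.ofReal)
      = (algebraMap ℝ (Matrix (Fin n) (Fin n) ℝ) r - A).map Complex.ofRealHom := by
    ext i j
    simp [Matrix.algebraMap_matrix_apply, Matrix.map_apply, apply_ite]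
  rw [h, ← RingHom.mapMatrix_apply, ← RingHom.map_det, hr, map_zero]

set_option maxHeartbeats 1000000 in
theorem generalSKT_entropyStructure {n : ℕ}
    (π u p : Fin n → ℝ) (hπ : ∀ i, 0 < π i) (hu : ∀ i, 0 < u i)
    (hp : ∀ i, 0 < p i)
    (Q : Matrix (Fin n) (Fin n) ℝ) (hQ : NormallyElliptic Q)
    (hdb : ∀ i j, i ≠ j → π i * Q i j = π j * Q j i) :
    (Matrix.diagonal (fun i => π i / u i) *
        Matrix.of (fun i j => (if i = j then p i else 0) + u i * Q i j)).IsSymm ∧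
      PosDefMat (Matrix.diagonal (fun i => π i / u i) *
        Matrix.of (fun i j => (if i = j then p i else 0) + u i * Q i j)) := by
  classical
  have hune : ∀ i, u i ≠ 0 := fun i => (hu i).ne'
  set S : Matrix (Fin n) (Fin n) ℝ := Matrix.of (fun i j => π i * Q i j) with hSdef
  set g : Fin n → ℝ := fun i => π i * p i / u i with hgdef
  have hM : (Matrix.diagonal (fun i => π i / u i) *
        Matrix.of (fun i j => (if i = j then p i else 0) + u i * Q i j))
      = Matrix.diagonal g + S := by
    ext i j
    simp only [Matrix.mul_apply, Matrix.diagonal_apply, Matrix.of_apply, Matrix.add_apply,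
      hSdef, hgdef]
    rw [Finset.sum_eq_single i (fun b _ hb => by simp [Ne.symm hb]) (by simp)]
    by_cases h : i = j
    · subst h
      simp only [if_pos rfl, eq_self_iff_true, if_true]
      have hui := hune i
      field_simp
    · simp only [if_neg h, Matrix.diagonal_apply_ne _ h, zero_add, eq_self_iff_true, if_true]
      have hui := hune i
      field_simp
  -- symmetry of S
  have hSsym : S.IsHermitian := by
    ext i j
    simp only [conjTranspose_apply, Matrix.of_apply, star_trivial, hSdef]
    by_cases h : i = j
    · subst h; rfl
    · exact hdb j i (Ne.symm h)
  -- square roots of the weights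
  set d : Fin n → ℝ := fun i => Real.sqrt (π i) with hddef
  have hd : ∀ i, 0 < d i := fun i => Real.sqrt_pos.mpr (hπ i)
  have hdne : ∀ i, d i ≠ 0 := fun i => (hd i).ne'
  have hdd : ∀ i, d i * d i = π i := fun i => Real.mul_self_sqrt (hπ i).le
  set T : Matrix (Fin n) (Fin n) ℝ :=
    Matrix.diagonal (fun i => (d i)⁻¹) * S * Matrix.diagonal (fun i => (d i)⁻¹) with hTdef
  have hDct : (Matrix.diagonal (fun i => (d i)⁻¹) : Matrix (Fin n) (Fin n) ℝ)ᴴ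
      = Matrix.diagonal (fun i => (d i)⁻¹) := by
    simp [Matrix.diagonal_conjTranspose]
  have hTH : T.IsHermitian := by
    have h := Matrix.isHermitian_conjTranspose_mul_mul
      (Matrix.diagonal fun i => (d i)⁻¹) hSsym
    rwa [hDct] at h
  -- T is a conjugate of Q
  have hSQ : S = Matrix.diagonal π * Q := by
    ext i j; simp [hSdef, Matrix.diagonal_mul]
  have hT2 : T = Matrix.diagonal d * Q * Matrix.diagonal (fun i => (d i)⁻¹) := by
    rw [hTdef, hSQ, ← Matrix.mul_assoc, Matrix.diagonal_mul_diagonal]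
    have : (fun i => (d i)⁻¹ * π i) = d :=
      funext fun i => by rw [← hdd i, ← mul_assoc, inv_mul_cancel₀ (hdne i), one_mul]
    rw [this]
  -- the complex diagonal unit
  have hcne : ∀ i, (d i : ℂ) ≠ 0 := fun i => Complex.ofReal_ne_zero.mpr (hdne i)
  have hone : (fun i => (d i : ℂ) * ((d i : ℂ))⁻¹) = fun _ => (1 : ℂ) :=
    funext fun i => mul_inv_cancel₀ (hcne i)
  have hone' : (fun i => ((d i : ℂ))⁻¹ * (d i : ℂ)) = fun _ => (1 : ℂ) :=
    funext fun i => inv_mul_cancel₀ (hcne i)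
  set uC : (Matrix (Fin n) (Fin n) ℂ)ˣ :=
    ⟨Matrix.diagonal (fun i => (d i : ℂ)), Matrix.diagonal (fun i => ((d i : ℂ))⁻¹),
      by rw [Matrix.diagonal_mul_diagonal, hone, Matrix.diagonal_one],
      by rw [Matrix.diagonal_mul_diagonal, hone', Matrix.diagonal_one]⟩ with huC
  have hmap : T.map Complex.ofReal
      = (uC : Matrix (Fin n) (Fin n) ℂ) * Q.map Complex.ofReal *
        ((uC⁻¹ : (Matrix (Fin n) (Fin n) ℂ)ˣ) : Matrix (Fin n) (Fin n) ℂ) := by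
    have huCv : (uC : Matrix (Fin n) (Fin n) ℂ) = Matrix.diagonal (fun i => (d i : ℂ)) := rfl
    have huCi : ((uC⁻¹ : (Matrix (Fin n) (Fin n) ℂ)ˣ) : Matrix (Fin n) (Fin n) ℂ)
        = Matrix.diagonal (fun i => ((d i : ℂ))⁻¹) := rfl
    rw [hT2, huCv, huCi]
    ext i j
    simp [Matrix.mul_diagonal, Matrix.diagonal_mul, Matrix.map_apply,
      Complex.ofReal_inv, Complex.ofReal_mul]
  -- eigenvalues of T are positive
  have heig : ∀ i, 0 ≤ hTH.eigenvalues i := by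
    intro i
    have h1 := hTH.eigenvalues_mem_spectrum_real i
    have h2 := real_spectrum_to_complex T h1
    rw [hmap, spectrum.units_conjugate] at h2
    have h3 := hQ _ h2
    simpa using h3.le
  have hTps : T.PosSemidef := hTH.posSemidef_iff_eigenvalues_nonneg.mpr heig
  -- S is positive semidefinite
  have h1 : Matrix.diagonal d * Matrix.diagonal (fun i => (d i)⁻¹)
      = (1 : Matrix (Fin n) (Fin n) ℝ) := by
    rw [Matrix.diagonal_mul_diagonal,
      funext fun i => mul_inv_cancel₀ (hdne i), Matrix.diagonal_one]
  have h2 : Matrix.diagonal (fun i => (d i)⁻¹) * Matrix.diagonal d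
      = (1 : Matrix (Fin n) (Fin n) ℝ) := by
    rw [Matrix.diagonal_mul_diagonal,
      funext fun i => inv_mul_cancel₀ (hdne i), Matrix.diagonal_one]
  have hS2 : Matrix.diagonal d * T * (Matrix.diagonal d)ᴴ = S := by
    have hct : (Matrix.diagonal d : Matrix (Fin n) (Fin n) ℝ)ᴴ = Matrix.diagonal d := by
      simp [Matrix.diagonal_conjTranspose]
    rw [hct, hTdef, ← Matrix.mul_assoc, ← Matrix.mul_assoc, h1, Matrix.one_mul,
      Matrix.mul_assoc, h2, Matrix.mul_one]
  have hSps : S.PosSemidef := hS2 ▸ hTps.mul_mul_conjTranspose_same (Matrix.diagonal d)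
  rw [hM]
  constructor
  · -- symmetry
    have hST : Sᵀ = S := by
      ext i j
      have := congrFun (congrFun hSsym.eq i) j
      simpa using this
    rw [Matrix.IsSymm, Matrix.transpose_add, Matrix.diagonal_transpose, hST]
  · intro z hz
    obtain ⟨i0, hi0⟩ := Function.ne_iff.mp hz
    rw [Matrix.add_mulVec, dotProduct_add]
    have hfirst : 0 < z ⬝ᵥ (Matrix.diagonal g).mulVec z := by
      rw [dotProduct]
      apply Finset.sum_pos'
      · intro i _
        rw [Matrix.mulVec_diagonal]
        have hg : 0 ≤ g i := by
          have h1 := hπ i; have h2 := hp i; have h3 := hu i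
          have : g i = π i * p i / u i := rfl
          rw [this]
          positivity
        rw [show z i * (g i * z i) = g i * (z i * z i) by ring]
        exact mul_nonneg hg (mul_self_nonneg _)
      · refine ⟨i0, Finset.mem_univ _, ?_⟩
        rw [Matrix.mulVec_diagonal]
        have hg : 0 < g i0 := by
          have h1 := hπ i0; have h2 := hp i0; have h3 := hu i0
          have : g i0 = π i0 * p i0 / u i0 := rfl
          rw [this]
          positivity
        rw [show z i0 * (g i0 * z i0) = g i0 * (z i0 * z i0) by ring]
        exact mul_pos hg (mul_self_pos.mpr hi0)
    have hsecond : 0 ≤ z ⬝ᵥ S.mulVec z := by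
      have := hSps.dotProduct_mulVec_nonneg z
      simpa using this
    linarith
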